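/- For all real t ≥ 1 and all v with 0 ≤ v ≤ 1, we have 1/(1 - (v·(1-v)/2)·(1/t - 1)²) ≤ ((1-v) + v·t)/t^v. -/

import Mathlib

open Real Set

private lemma bern_aux {x v : ℝ} (hx : 0 < x) (hv0 : 0 ≤ v) (hv1 : v ≤ 1) :
    x ^ (v - 1) ≤ 1 - (1 - v) / 2 * (1 - (x ^ 2)⁻¹) := by
  have h := Real.geom_mean_le_arith_mean2_weighted (w₁ := (1 - v) / 2) (w₂ := (1 + v) / 2)
    (p₁ := (x ^ 2)⁻¹) (p₂ := 1) (by linarith) (by linarith)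
    (by positivity) zero_le_one (by ring)
  have he : ((x ^ 2)⁻¹) ^ ((1 - v) / 2) = x ^ (v - 1) := by
    rw [show ((x:ℝ) ^ 2)⁻¹ = x ^ (-2 : ℝ) by
      rw [Real.rpow_neg hx.le, Real.rpow_two]]
    rw [← Real.rpow_mul hx.le]
    congr 1
    ring
  rw [he, Real.one_rpow, mul_one] at h
  linarith

private lemma key_lemma {t v : ℝ} (ht : 1 ≤ t) (hv0 : 0 ≤ v) (hv1 : v ≤ 1) :
    t ^ v ≤ 1 + v * (t - 1) - v * (1 - v) / 2 * (t - 2 + t⁻¹) := by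
  set g : ℝ → ℝ := fun y => 1 + v * (y - 1) - v * (1 - v) / 2 * (y - 2 + y⁻¹) - y ^ v with hgdef
  have hg : ∀ x : ℝ, 0 < x →
      HasDerivAt g (v - v * (1 - v) / 2 * (1 - (x ^ 2)⁻¹) - v * x ^ (v - 1)) x := by
    intro x hx
    have h1 : HasDerivAt (fun y : ℝ => 1 + v * (y - 1)) v x := by
      simpa using (((hasDerivAt_id x).sub_const 1).const_mul v).const_add 1
    have h2 : HasDerivAt (fun y : ℝ => y - 2 + y⁻¹) (1 - (x ^ 2)⁻¹) x := by
      exact (((hasDerivAt_id x).sub_const 2).add (hasDerivAt_inv hx.ne')).congr_deriv (by ring)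
    have h3 : HasDerivAt (fun y : ℝ => y ^ v) (v * x ^ (v - 1)) x :=
      Real.hasDerivAt_rpow_const (Or.inl hx.ne')
    exact (h1.sub (h2.const_mul (v * (1 - v) / 2))).sub h3
  have hmono : MonotoneOn g (Ici (1 : ℝ)) := by
    apply monotoneOn_of_deriv_nonneg (convex_Ici 1)
    · intro x hx
      have hx0 : (0:ℝ) < x := lt_of_lt_of_le one_pos hx
      exact ((hg x hx0).continuousAt).continuousWithinAt
    · intro x hx
      rw [interior_Ici] at hx
      exact ((hg x (lt_trans one_pos hx)).differentiableAt).differentiableWithinAt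
    · intro x hx
      rw [interior_Ici] at hx
      have hx0 : (0:ℝ) < x := lt_trans one_pos hx
      rw [(hg x hx0).deriv]
      have hb := bern_aux hx0 hv0 hv1
      have := mul_le_mul_of_nonneg_left hb hv0
      nlinarith
  have h1 : g 1 ≤ g t := hmono (by simp) (by simpa using ht) ht
  have hg1 : g 1 = 0 := by norm_num [hgdef, Real.one_rpow]
  rw [hg1] at h1
  simp only [hgdef] at h1
  linarith

theorem stmt17 (t v : ℝ) (ht : 1 ≤ t) (hv0 : 0 ≤ v) (hv1 : v ≤ 1) :
    1 / (1 - (v * (1 - v) / 2) * (1 / t - 1) ^ 2) ≤ ((1 - v) + v * t) / t ^ v := by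
  have ht0 : (0:ℝ) < t := lt_of_lt_of_le one_pos ht
  have htv : (0:ℝ) < t ^ v := Real.rpow_pos_of_pos ht0 v
  have hq : (1 / t - 1) ^ 2 ≤ 1 := by
    have h1 : 0 < 1 / t := by positivity
    have h2 : 1 / t ≤ 1 := by rw [div_le_one ht0]; exact ht
    nlinarith
  have hk : v * (1 - v) ≤ 1 / 4 := by nlinarith [sq_nonneg (2*v-1)]
  have hk0 : 0 ≤ v * (1 - v) := by nlinarith
  have hc : 1 - (v * (1 - v) / 2) * (1 / t - 1) ^ 2 > 0 := by nlinarith [sq_nonneg (1 / t - 1)]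
  rw [div_le_div_iff₀ hc htv, one_mul]
  have hkey := key_lemma ht hv0 hv1
  have hqe : (1 / t - 1) ^ 2 = (t - 1) ^ 2 / t ^ 2 := by field_simp; ring
  have hpe : t - 2 + t⁻¹ = (t - 1) ^ 2 / t := by field_simp; ring
  rw [hpe] at hkey
  rw [hqe]
  -- need: t ^ v ≤ ((1-v)+v*t) * (1 - v*(1-v)/2 * ((t-1)^2/t^2))
  have hA : (1 - v) + v * t ≤ t := by nlinarith
  have hA0 : 0 ≤ (1 - v) + v * t := by nlinarith
  have hstep : ((1 - v) + v * t) * (v * (1 - v) / 2 * ((t - 1) ^ 2 / t ^ 2))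
      ≤ v * (1 - v) / 2 * ((t - 1) ^ 2 / t) := by
    have h := mul_le_mul_of_nonneg_right hA
      (show (0:ℝ) ≤ v * (1 - v) / 2 * ((t - 1) ^ 2 / t ^ 2) by positivity)
    have he : t * (v * (1 - v) / 2 * ((t - 1) ^ 2 / t ^ 2)) = v * (1 - v) / 2 * ((t - 1) ^ 2 / t) := by
      field_simp
    linarith
  nlinarith
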